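/- Suppose n ≥ 2, f(d,l) = 1, and the index j is such that α := (t̄_j − v_j)/γ_j and β := (t̄_j + v_j)/γ_j (with γ_j := sqrt(a_jᵀBa_j)) satisfy αβ ≤ −2/n and max{α, −β} ≤ −2/n. Then there exists σ̂ < 0 such that g̃(d₊(σ̂), l) ≤ g̃(d, l) − 1/(4n), where d₊(σ) := d + (σ/((1−σ)γ_j²)) e_j and g̃(d,l) := n·f(d,l) − ln det(ADAᵀ) − n. -/

import Mathlib

open Matrix

section AuxLemmas

variable {n m : ℕ}

lemma aux_vecMulVec_mulVec (u v x : Fin n → ℝ) :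
    (vecMulVec u v) *ᵥ x = (v ⬝ᵥ x) • u := by
  ext i
  simp only [vecMulVec_apply, mulVec, dotProduct, Pi.smul_apply, smul_eq_mul]
  rw [Finset.sum_mul]
  exact Finset.sum_congr rfl fun _ _ => by ring

lemma aux_mul_vecMulVec (N : Matrix (Fin n) (Fin n) ℝ) (u v : Fin n → ℝ) :
    N * vecMulVec u v = vecMulVec (N *ᵥ u) v := by
  ext i k
  simp only [vecMulVec_apply, mul_apply, mulVec, dotProduct]
  rw [Finset.sum_mul]
  exact Finset.sum_congr rfl fun _ _ => by ring

lemma aux_vecMulVec_mul (N : Matrix (Fin n) (Fin n) ℝ) (u v : Fin n → ℝ) :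
    vecMulVec u v * N = vecMulVec u (v ᵥ* N) := by
  ext i k
  simp only [vecMulVec_apply, mul_apply, vecMul, dotProduct]
  rw [Finset.mul_sum]
  exact Finset.sum_congr rfl fun _ _ => by ring

lemma aux_smul_vecMulVec (c : ℝ) (u v : Fin n → ℝ) :
    vecMulVec (c • u) v = c • vecMulVec u v := by
  ext i k
  simp [vecMulVec_apply, mul_assoc]

lemma aux_vecMulVec_mul_vecMulVec (u v x y : Fin n → ℝ) :
    vecMulVec u v * vecMulVec x y = (v ⬝ᵥ x) • vecMulVec u y := by
  ext i k
  simp only [mul_apply, vecMulVec_apply, Matrix.smul_apply, smul_eq_mul, dotProduct]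
  rw [Finset.sum_mul]
  exact Finset.sum_congr rfl fun _ _ => by ring

lemma aux_diag_split (d : Fin m → ℝ) (j : Fin m) (δ : ℝ) :
    Matrix.diagonal (d + δ • (Pi.single j 1 : Fin m → ℝ))
      = Matrix.diagonal d + δ • Matrix.diagonal (Pi.single j 1) := by
  rw [show (d + δ • (Pi.single j 1 : Fin m → ℝ))
        = (fun i => d i + (δ • (Pi.single j 1 : Fin m → ℝ)) i) from rfl,
      ← diagonal_add, diagonal_smul]

lemma aux_key_M (A : Matrix (Fin n) (Fin m) ℝ) (d : Fin m → ℝ) (j : Fin m) (δ : ℝ) :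
    A * Matrix.diagonal (d + δ • (Pi.single j 1 : Fin m → ℝ)) * Aᵀ
      = A * Matrix.diagonal d * Aᵀ + δ • vecMulVec (fun k => A k j) (fun k => A k j) := by
  have h2 : A * Matrix.diagonal (Pi.single j 1 : Fin m → ℝ) * Aᵀ
      = vecMulVec (fun k => A k j) (fun k => A k j) := by
    ext i k
    simp only [mul_apply, diagonal_apply, vecMulVec_apply, transpose_apply, Pi.single_apply]
    simp [Finset.sum_ite_eq, Finset.mul_sum, mul_ite]
  rw [aux_diag_split, Matrix.mul_add, Matrix.add_mul, Matrix.mul_smul, Matrix.smul_mul, h2]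

lemma aux_single_mulVec (d' : Fin m → ℝ) (j : Fin m) (r : Fin m → ℝ) :
    Matrix.diagonal (Pi.single j 1 : Fin m → ℝ) *ᵥ r = Pi.single j (r j) := by
  ext i
  simp only [mulVec_diagonal, Pi.single_apply]
  by_cases h : i = j <;> simp [h]

lemma aux_det_rank_one (M : Matrix (Fin n) (Fin n) ℝ) (hM : IsUnit M.det)
    (a : Fin n → ℝ) (δ : ℝ) :
    (M + δ • vecMulVec a a).det = M.det * (1 + δ * (a ⬝ᵥ (M⁻¹ *ᵥ a))) := by
  have h2 : M + δ • vecMulVec a a = M * (1 + δ • vecMulVec (M⁻¹ *ᵥ a) a) := by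
    rw [Matrix.mul_add, Matrix.mul_one, Matrix.mul_smul, aux_mul_vecMulVec, mulVec_mulVec,
      Matrix.mul_nonsing_inv _ hM, one_mulVec]
  have h3 : (1 : Matrix (Fin n) (Fin n) ℝ) + δ • vecMulVec (M⁻¹ *ᵥ a) a
      = 1 + replicateCol (Fin 1) (δ • (M⁻¹ *ᵥ a)) * replicateRow (Fin 1) a := by
    rw [← aux_smul_vecMulVec, vecMulVec_eq (Fin 1)]
    rfl
  rw [h2, det_mul, h3]
  erw [det_one_add_replicateCol_mul_replicateRow]
  rw [dotProduct_smul]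
  simp [smul_eq_mul]

lemma aux_inv_rank_one (M B : Matrix (Fin n) (Fin n) ℝ) (hMB : M * B = 1)
    (hBsymm : Bᵀ = B) (a : Fin n → ℝ) (δ : ℝ)
    (h : 1 + δ * (a ⬝ᵥ (B *ᵥ a)) ≠ 0) :
    (M + δ • vecMulVec a a)⁻¹
      = B - (δ / (1 + δ * (a ⬝ᵥ (B *ᵥ a)))) • vecMulVec (B *ᵥ a) (B *ᵥ a) := by
  set g2 := a ⬝ᵥ (B *ᵥ a) with hg2
  set c := δ / (1 + δ * g2) with hc
  apply inv_eq_right_inv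
  have havB : a ᵥ* B = B *ᵥ a := by rw [← hBsymm, mulVec_transpose, hBsymm]
  have e1 : M * vecMulVec (B *ᵥ a) (B *ᵥ a) = vecMulVec a (B *ᵥ a) := by
    rw [aux_mul_vecMulVec, mulVec_mulVec, hMB, one_mulVec]
  have e2 : vecMulVec a a * B = vecMulVec a (B *ᵥ a) := by
    rw [aux_vecMulVec_mul, havB]
  have e3 : vecMulVec a a * vecMulVec (B *ᵥ a) (B *ᵥ a)
      = g2 • vecMulVec a (B *ᵥ a) := by
    rw [aux_vecMulVec_mul_vecMulVec, hg2]
  have hz : δ - c - δ * c * g2 = 0 := by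
    rw [hc]; field_simp; ring
  have expand : (M + δ • vecMulVec a a) * (B - c • vecMulVec (B *ᵥ a) (B *ᵥ a))
      = 1 + (δ - c - δ * c * g2) • vecMulVec a (B *ᵥ a) := by
    rw [Matrix.add_mul, Matrix.smul_mul, Matrix.mul_sub, Matrix.mul_sub, Matrix.mul_smul,
      Matrix.mul_smul, hMB, e1, e2, e3]
    module
  rw [expand, hz, zero_smul, add_zero]

end AuxLemmas

/-- `f(d,l) := rᵀDAᵀBADr - rᵀDr + vᵀDv`. -/
noncomputable def fval {n m : ℕ} (A : Matrix (Fin n) (Fin m) ℝ) (u d l : Fin m → ℝ) : ℝ :=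
  let D := Matrix.diagonal d
  let r := (u + l) / 2
  let v := (u - l) / 2
  let B := (A * D * Aᵀ)⁻¹
  r ⬝ᵥ (D *ᵥ (Aᵀ *ᵥ (B *ᵥ (A *ᵥ (D *ᵥ r))))) - r ⬝ᵥ (D *ᵥ r) + v ⬝ᵥ (D *ᵥ v)

/-- `g̃(d,l) := n·f(d,l) - ln det(ADAᵀ) - n`. -/
noncomputable def gtilde {n m : ℕ} (A : Matrix (Fin n) (Fin m) ℝ) (u l : Fin m → ℝ)
    (d : Fin m → ℝ) : ℝ :=
  (n : ℝ) * fval A u d l - Real.log ((A * Matrix.diagonal d * Aᵀ).det) - n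

lemma aux_fval_eq {n m : ℕ} (A : Matrix (Fin n) (Fin m) ℝ) (u d l : Fin m → ℝ) :
    fval A u d l
      = (A *ᵥ (Matrix.diagonal d *ᵥ ((u + l) / 2))) ⬝ᵥ
          ((A * Matrix.diagonal d * Aᵀ)⁻¹ *ᵥ (A *ᵥ (Matrix.diagonal d *ᵥ ((u + l) / 2))))
        - ((u + l) / 2) ⬝ᵥ (Matrix.diagonal d *ᵥ ((u + l) / 2))
        + ((u - l) / 2) ⬝ᵥ (Matrix.diagonal d *ᵥ ((u - l) / 2)) := by
  have key : ∀ (x : Fin m → ℝ) (z : Fin n → ℝ),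
      x ⬝ᵥ (Matrix.diagonal d *ᵥ (Aᵀ *ᵥ z)) = (A *ᵥ (Matrix.diagonal d *ᵥ x)) ⬝ᵥ z := by
    intro x z
    have hxd : x ᵥ* Matrix.diagonal d = Matrix.diagonal d *ᵥ x := by
      ext i
      simp [vecMul_diagonal, mulVec_diagonal, mul_comm]
    rw [dotProduct_mulVec, dotProduct_mulVec, vecMul_transpose, hxd]
  unfold fval
  simp only []
  rw [key]

set_option maxHeartbeats 1600000 in
/-- first part of Theorem 5.3 of the paper. For `n ≥ 2`, if
`αβ ≤ -2/n` and `max{α, -β} ≤ -2/n`, then some negative `σ̂` decreases `g̃` by at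
least `1/(4n)`. -/
theorem stmt_18 {n m : ℕ} (hn : 2 ≤ n) (A : Matrix (Fin n) (Fin m) ℝ) (u l d : Fin m → ℝ)
    (r v : Fin m → ℝ)
    (hd : 0 ≤ d)
    (hr : r = (u + l) / 2) (hv : v = (u - l) / 2)
    (hpd : (A * Matrix.diagonal d * Aᵀ).PosDef)
    (B : Matrix (Fin n) (Fin n) ℝ) (hB : B = (A * Matrix.diagonal d * Aᵀ)⁻¹)
    (ybar : Fin n → ℝ)
    (hybar : ybar = B *ᵥ (A *ᵥ (Matrix.diagonal d *ᵥ r)))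
    (hf : fval A u d l = 1)
    (tbar : Fin m → ℝ) (htbar : tbar = Aᵀ *ᵥ ybar - r)
    (j : Fin m) (γj : ℝ)
    (hγj : γj = Real.sqrt ((fun k => A k j) ⬝ᵥ (B *ᵥ (fun k => A k j))))
    (α β : ℝ) (hα : α = (tbar j - v j) / γj) (hβ : β = (tbar j + v j) / γj)
    (hαβ : α * β ≤ -2 / (n : ℝ)) (hmax : max α (-β) ≤ -2 / (n : ℝ)) :
    ∃ σ : ℝ, σ < 0 ∧
      gtilde A u l (d + (σ / ((1 - σ) * γj ^ 2)) • (Pi.single j 1 : Fin m → ℝ)) ≤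
        gtilde A u l d - 1 / (4 * (n : ℝ)) := by
  -- basic numeric facts
  have hnR : (2:ℝ) ≤ (n:ℝ) := by exact_mod_cast hn
  have hnpos : (0:ℝ) < (n:ℝ) := by linarith
  have hnne : (n:ℝ) ≠ 0 := ne_of_gt hnpos
  -- abbreviations
  set a : Fin n → ℝ := fun k => A k j with ha
  set M : Matrix (Fin n) (Fin n) ℝ := A * Matrix.diagonal d * Aᵀ with hMdef
  have hdetpos : 0 < M.det := hpd.det_pos
  have hdet : IsUnit M.det := isUnit_iff_ne_zero.mpr (ne_of_gt hdetpos)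
  have hMB : M * B = 1 := by rw [hB]; exact Matrix.mul_nonsing_inv _ hdet
  have hMsymm : Mᵀ = M := by
    rw [hMdef, Matrix.transpose_mul, Matrix.transpose_mul, Matrix.transpose_transpose,
      Matrix.diagonal_transpose, Matrix.mul_assoc]
  have hBsymm : Bᵀ = B := by
    rw [hB, Matrix.transpose_nonsing_inv, hMsymm]
  set g2 : ℝ := a ⬝ᵥ (B *ᵥ a) with hg2
  -- γj is positive
  have hγne : γj ≠ 0 := by
    intro h0
    rw [h0, div_zero] at hα
    rw [h0, div_zero] at hβ
    rw [hα, hβ] at hαβ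
    have h00 : (0:ℝ) * 0 = 0 := by ring
    rw [h00] at hαβ
    have h1 : (0:ℝ) < 2 / (n:ℝ) := by positivity
    have h2 : -2 / (n:ℝ) = -(2 / (n:ℝ)) := by ring
    linarith
  have hγpos : 0 < γj := lt_of_le_of_ne (hγj ▸ Real.sqrt_nonneg _) (Ne.symm hγne)
  have hg2pos : 0 < g2 := by
    by_contra hle
    push_neg at hle
    exact hγne (by rw [hγj]; exact Real.sqrt_eq_zero'.mpr hle)
  have hγsq : γj ^ 2 = g2 := by rw [hγj]; exact Real.sq_sqrt hg2pos.le
  -- α, β inequalities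
  have hαle : α ≤ -2 / (n:ℝ) := le_trans (le_max_left _ _) hmax
  have hβge : 2 / (n:ℝ) ≤ β := by
    have := le_trans (le_max_right _ _) hmax
    have h2 : -(2 / (n:ℝ)) = -2/(n:ℝ) := by ring
    linarith [this]
  set s : ℝ := β - α with hsdef
  have hs4 : 4 / (n:ℝ) ≤ s := by
    have : (4:ℝ)/(n:ℝ) = 2/(n:ℝ) + 2/(n:ℝ) := by ring
    have h2 : -(2 / (n:ℝ)) = -2/(n:ℝ) := by ring
    rw [hsdef]
    linarith
  have hspos : 0 < s := by
    have : (0:ℝ) < 4 / (n:ℝ) := by positivity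
    linarith
  have hsne : s ≠ 0 := ne_of_gt hspos
  -- the step size
  set t : ℝ := 1 / ((n:ℝ) * s) with htdef
  have htpos : 0 < t := by rw [htdef]; positivity
  have hts : t * s = 1 / (n:ℝ) := by rw [htdef]; field_simp
  have hnts : (n:ℝ) * t * s = 1 := by rw [htdef]; field_simp
  set σ : ℝ := -t with hσdef
  have hσneg : σ < 0 := by rw [hσdef]; linarith
  have h1σ : 1 - σ = 1 + t := by rw [hσdef]; ring
  have h1σpos : 0 < 1 - σ := by rw [h1σ]; linarith
  have h1tne : (1:ℝ) + t ≠ 0 := by positivity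
  refine ⟨σ, hσneg, ?_⟩
  set δ : ℝ := σ / ((1 - σ) * γj ^ 2) with hδdef
  have hτ : 1 + δ * g2 = 1 / (1 - σ) := by
    rw [hδdef, ← hγsq]
    field_simp
    ring
  have hτpos : 0 < 1 + δ * g2 := by rw [hτ]; positivity
  have hτne : 1 + δ * g2 ≠ 0 := ne_of_gt hτpos
  -- matrix-level facts
  have hMP : A * Matrix.diagonal (d + δ • (Pi.single j 1 : Fin m → ℝ)) * Aᵀ
      = M + δ • vecMulVec a a := by
    rw [hMdef]; exact aux_key_M A d j δ
  have hdetP : (M + δ • vecMulVec a a).det = M.det * (1 + δ * g2) := by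
    rw [aux_det_rank_one M hdet a δ, ← hB]
  have hinvP : (M + δ • vecMulVec a a)⁻¹
      = B - (δ / (1 + δ * g2)) • vecMulVec (B *ᵥ a) (B *ᵥ a) := by
    exact aux_inv_rank_one M B hMB hBsymm a δ hτne
  -- scalar quantities
  set w : Fin n → ℝ := A *ᵥ (Matrix.diagonal d *ᵥ r) with hw
  set cc : ℝ := a ⬝ᵥ (B *ᵥ w) with hccdef
  have hsymPair : ∀ x y : Fin n → ℝ, x ⬝ᵥ (B *ᵥ y) = y ⬝ᵥ (B *ᵥ x) := by
    intro x y
    rw [dotProduct_mulVec, ← mulVec_transpose, hBsymm, dotProduct_comm]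
  have htj : tbar j = cc - r j := by
    rw [htbar]
    have h1 : (Aᵀ *ᵥ ybar) j = a ⬝ᵥ ybar := by
      simp [mulVec, dotProduct, transpose_apply, ha]
    simp only [Pi.sub_apply]
    rw [h1, hybar, ← hccdef]
  set e : ℝ := δ * r j with hedef
  have hwP : A *ᵥ (Matrix.diagonal (d + δ • (Pi.single j 1 : Fin m → ℝ)) *ᵥ r) = w + e • a := by
    have hs1 : A *ᵥ (Pi.single j (r j) : Fin m → ℝ) = (r j) • a := by
      rw [mulVec_single]
      funext i
      simp [ha, mul_comm]
    rw [aux_diag_split, Matrix.add_mulVec, Matrix.smul_mulVec, aux_single_mulVec d,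
      mulVec_add, mulVec_smul, hs1, smul_smul, hw, hedef]
  have hrDrP : r ⬝ᵥ (Matrix.diagonal (d + δ • (Pi.single j 1 : Fin m → ℝ)) *ᵥ r)
      = r ⬝ᵥ (Matrix.diagonal d *ᵥ r) + δ * (r j)^2 := by
    rw [aux_diag_split, Matrix.add_mulVec, Matrix.smul_mulVec, aux_single_mulVec d,
      dotProduct_add, dotProduct_smul, dotProduct_single]
    simp only [smul_eq_mul]
    ring
  have hvDvP : v ⬝ᵥ (Matrix.diagonal (d + δ • (Pi.single j 1 : Fin m → ℝ)) *ᵥ v)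
      = v ⬝ᵥ (Matrix.diagonal d *ᵥ v) + δ * (v j)^2 := by
    rw [aux_diag_split, Matrix.add_mulVec, Matrix.smul_mulVec, aux_single_mulVec d,
      dotProduct_add, dotProduct_smul, dotProduct_single]
    simp only [smul_eq_mul]
    ring
  have hg2' : (B *ᵥ a) ⬝ᵥ a = g2 := by
    rw [dotProduct_comm]
  have hcc1 : (B *ᵥ a) ⬝ᵥ w = cc := by
    rw [dotProduct_comm, hsymPair w a, ← hccdef]
  have hcc2 : w ⬝ᵥ (B *ᵥ a) = cc := by
    rw [hsymPair w a, ← hccdef]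
  set c0 : ℝ := δ / (1 + δ * g2) with hc0
  have hq : (w + e • a) ⬝ᵥ ((B - c0 • vecMulVec (B *ᵥ a) (B *ᵥ a)) *ᵥ (w + e • a))
      = (w ⬝ᵥ (B *ᵥ w)) + 2*e*cc + e^2*g2 - c0*(cc + e*g2)^2 := by
    have hBax : (B *ᵥ a) ⬝ᵥ (w + e • a) = cc + e * g2 := by
      rw [dotProduct_add, dotProduct_smul, hcc1, hg2']
      simp only [smul_eq_mul]
    rw [Matrix.sub_mulVec, Matrix.smul_mulVec, aux_vecMulVec_mulVec, hBax,
      mulVec_add, mulVec_smul]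
    simp only [dotProduct_sub, dotProduct_add, dotProduct_smul, add_dotProduct,
      smul_dotProduct, smul_eq_mul, hcc2, hg2']
    rw [← hccdef, ← hg2]
    ring
  -- fval at the perturbed point
  have hfvalP : fval A u (d + δ • (Pi.single j 1 : Fin m → ℝ)) l
      = fval A u d l + δ * (v j)^2 - δ * (tbar j)^2 / (1 + δ * g2) := by
    rw [aux_fval_eq A u (d + δ • (Pi.single j 1 : Fin m → ℝ)) l, aux_fval_eq A u d l,
      ← hr, ← hv, hMP, hinvP, hwP, hrDrP, hvDvP, ← hMdef, ← hB, ← hw, hq, htj]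
    rw [hedef, hc0]
    field_simp
    ring
  -- log facts
  have hlogdet : Real.log ((A * Matrix.diagonal (d + δ • (Pi.single j 1 : Fin m → ℝ)) * Aᵀ).det)
      = Real.log (M.det) + Real.log (1 + δ * g2) := by
    rw [hMP, hdetP, Real.log_mul (ne_of_gt hdetpos) hτne]
  have hlogτ : Real.log (1 + δ * g2) = -Real.log (1 + t) := by
    rw [hτ, h1σ, one_div, Real.log_inv]
  have hlog1 : Real.log (1 + t) ≤ t := by
    have h := Real.log_le_sub_one_of_pos (show (0:ℝ) < 1 + t by linarith)
    linarith
  -- express v j and tbar j through α, β, γj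
  have e1 : tbar j - v j = α * γj := by rw [hα]; field_simp
  have e2 : tbar j + v j = β * γj := by rw [hβ]; field_simp
  have hvjval : v j = (β - α) * γj / 2 := by linarith
  have htbval : tbar j = (α + β) * γj / 2 := by linarith
  have hδval : δ = -t / ((1 + t) * γj ^ 2) := by rw [hδdef, h1σ, hσdef]
  have hA1 : δ * (v j)^2 = -(t * s^2) / (4*(1+t)) := by
    rw [hδval, hvjval, hsdef]
    field_simp
    ring
  have hA2 : δ * (tbar j)^2 / (1 + δ * g2) = -(t * (α+β)^2) / 4 := by
    rw [hτ, hδval, htbval, h1σ]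
    field_simp
    ring
  -- core numeric inequality
  have hcore : (n:ℝ) * (δ * (v j)^2 - δ * (tbar j)^2 / (1 + δ * g2)) + Real.log (1+t)
      ≤ -1 / (4*(n:ℝ)) := by
    rw [hA1, hA2]
    clear_value t s
    set q : ℝ := 2 / (n:ℝ) with hqdef
    have hq1 : (n:ℝ) * q = 2 := by rw [hqdef]; field_simp
    have hqpos : 0 < q := by rw [hqdef]; positivity
    have hs2q : 2 * q ≤ s := by
      have : 4 / (n:ℝ) = 2 * q := by rw [hqdef]; ring
      linarith [hs4]
    clear_value q
    have hαq : α ≤ -q := by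
      have : -2 / (n:ℝ) = -q := by rw [hqdef]; ring
      linarith [hαle]
    have hβq : q ≤ β := by
      have : 2 / (n:ℝ) = q := by rw [hqdef]
      linarith [hβge]
    have hab1 : (n:ℝ) * (α*β) ≤ -2 := by
      have h := mul_le_mul_of_nonneg_left hαβ hnpos.le
      have h2 : (-2)/(n:ℝ) * (n:ℝ) = -2 := div_mul_cancel₀ _ hnne
      linarith
    have hab2 : (n:ℝ) * (α*β) ≤ -s := by
      have k1 : 0 ≤ -α - q := by linarith
      have k2 : 0 ≤ β - q := by linarith
      have k5 : 0 ≤ (n:ℝ) * (-α - q) * (β - q) :=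
        mul_nonneg (mul_nonneg hnpos.le k1) k2
      have expand : (n:ℝ) * (-α - q) * (β - q)
          = -((n:ℝ)*(α*β)) - ((n:ℝ)*q)*β + ((n:ℝ)*q)*α + ((n:ℝ)*q)*q := by ring
      rw [hq1] at expand
      have hq2 : 2 * q ≤ s := hs2q
      have hss : s = β - α := hsdef
      linarith [k5, expand]
    have e1' : (n:ℝ) * (-(t*s^2) / (4*(1+t)) - -(t*(α+β)^2) / 4)
        = (n:ℝ)*t^2*s^2/(4*(1+t)) + t*((n:ℝ)*(α*β)) := by
      have hexp : (α+β)^2 = s^2 + 4*(α*β) := by rw [hsdef]; ring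
      rw [hexp]
      field_simp
      ring
    have b1 : (n:ℝ)*t^2*s^2/(4*(1+t)) ≤ (1/4)*(1/(n:ℝ)) := by
      have hX : (n:ℝ)*t^2*s^2 = 1/(n:ℝ) := by
        have h : (n:ℝ)*t^2*s^2 = ((n:ℝ)*t*s)*(t*s) := by ring
        rw [h, hnts, hts]
        ring
      rw [hX]
      have hinvpos : (0:ℝ) < 1/(n:ℝ) := by positivity
      have hden : (0:ℝ) < 4*(1+t) := by linarith
      have hmono : 1/(n:ℝ)/(4*(1+t)) ≤ 1/(n:ℝ)/4 :=
        div_le_div_of_nonneg_left hinvpos.le (by norm_num) (by linarith)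
      have heq : 1/(n:ℝ)/4 = (1/4)*(1/(n:ℝ)) := by ring
      linarith
    have b2 : t*((n:ℝ)*(α*β)) ≤ -(1/2)*(1/(n:ℝ)) - t := by
      have h2 : (n:ℝ)*(α*β) ≤ -(s+2)/2 := by linarith [hab1, hab2]
      have h3 : t*((n:ℝ)*(α*β)) ≤ t*(-(s+2)/2) :=
        mul_le_mul_of_nonneg_left h2 htpos.le
      have h4 : t*(-(s+2)/2) = -(t*s)/2 - t := by ring
      rw [hts] at h4
      have h5 : -(1/(n:ℝ))/2 - t = -(1/2)*(1/(n:ℝ)) - t := by ring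
      linarith
    have hgoal' : -1/(4*(n:ℝ)) = -(1/4)*(1/(n:ℝ)) := by ring
    rw [hgoal']
    linarith [e1', b1, b2, hlog1]
  -- assemble
  unfold gtilde
  rw [hfvalP, hf, hlogdet, hlogτ, ← hMdef]
  have hrw : (n:ℝ) * (1 + δ * (v j)^2 - δ * (tbar j)^2 / (1 + δ * g2))
      = (n:ℝ) + (n:ℝ) * (δ * (v j)^2 - δ * (tbar j)^2 / (1 + δ * g2)) := by ring
  have hc2 : -1/(4*(n:ℝ)) = -(1/4)*(1/(n:ℝ)) := by ring
  have hc3 : 1/(4*(n:ℝ)) = (1/4)*(1/(n:ℝ)) := by ring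
  rw [hc2] at hcore
  rw [hc3]
  linarith [hcore, hrw]
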